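/- For every k ≥ 2, the Lyndon factorization of F_{2k} with its last two characters removed is ℓ_1, …, ℓ_{k-2}, φ^{k-2}(a), φ^{k-3}(a), …, φ^0(a), where ℓ_1 = ab, ℓ_{i+1} = φ(ℓ_i), and φ(a) = aab, φ(b) = ab. -/

import Mathlib

/-- Strings over the binary alphabet `{a, b}`: `false` is `a`, `true` is `b`. -/
abbrev Word := List Bool

/-- `w` is primitive if it is not of the form `x^j` for any `j ≥ 2`. -/
def Primitive (w : Word) : Prop := ¬ ∃ (x : Word) (j : ℕ), 2 ≤ j ∧ w = (List.replicate j x).flatten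

/-- `u` occurs in `w` at (0-indexed) position `i`. -/
def occursAt (u w : Word) (i : ℕ) : Prop :=
  i + u.length ≤ w.length ∧ (w.drop i).take u.length = u

instance (u w : Word) (i : ℕ) : Decidable (occursAt u w i) := by
  unfold occursAt; infer_instance

/-- Fibonacci words: `F 1 = b`, `F 2 = a`, `F (k+1) = F k ++ F (k-1)`. -/
def F : ℕ → Word
  | 0 => []
  | 1 => [true]
  | 2 => [false]
  | (n+3) => F (n+2) ++ F (n+1)

/-- Fibonacci numbers with `f 1 = f 2 = 1`. -/
def f : ℕ → ℕ
  | 0 => 0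
  | 1 => 1
  | (n+2) => f (n+1) + f n

/-- The morphism `φ(a) = aab`, `φ(b) = ab`. -/
def phi (w : Word) : Word := w.flatMap fun c => if c then [false, true] else [false, false, true]

/-- Lexicographic order on words induced by `a < b` (a proper prefix is smaller). -/
def wlt (x y : Word) : Prop := List.Lex (· < ·) x y

/-- `u` is a border of `w`: a proper substring that is both a prefix and a suffix. -/
def IsBorder (u w : Word) : Prop := u ≠ w ∧ u <+: w ∧ u <:+ w

/-- `w` is a Lyndon word: it is smaller than all of its proper nonempty suffixes. -/
def IsLyndon (w : Word) : Prop := ∀ s : Word, s <:+ w → s ≠ [] → s ≠ w → wlt w s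

/-- `fs` is the Lyndon factorization of `w`: a factorization into nonempty Lyndon
words that is lexicographically non-increasing (powers written as repetitions). -/
def IsLyndonFactorization (w : Word) (fs : List Word) : Prop :=
  fs.flatten = w ∧ (∀ x ∈ fs, IsLyndon x ∧ x ≠ []) ∧ List.Chain' (fun x y => ¬ wlt x y) fs

/-- `ℓ 1 = ab`, `ℓ (k+1) = φ (ℓ k)`. -/
def ell : ℕ → Word
  | 0 => []
  | 1 => [false, true]
  | (n+2) => phi (ell (n+1))

lemma phi_append (u v : Word) : phi (u ++ v) = phi u ++ phi v := List.flatMap_append ..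

lemma phi_cons (c : Bool) (w : Word) :
    phi (c :: w) = (if c then [false, true] else [false, false, true]) ++ phi w := rfl

lemma lex_append_left {r : Bool → Bool → Prop} {x y : Word} (u : Word) (h : List.Lex r x y) :
    List.Lex r (u ++ x) (u ++ y) := by
  induction u with
  | nil => exact h
  | cons c u ih => exact List.Lex.cons ih

lemma lex_of_append_ne {r : Bool → Bool → Prop} (x t : Word) (ht : t ≠ []) :
    List.Lex r x (x ++ t) := by
  induction x with
  | nil => cases t with
    | nil => exact absurd rfl ht
    | cons c t => exact List.Lex.nil
  | cons c x ih => exact List.Lex.cons ih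

lemma bool_lt {a b : Bool} (h : a < b) : a = false ∧ b = true := by
  revert h; cases a <;> cases b <;> decide

lemma phi_mono {x y : Word} (h : wlt x y) : wlt (phi x) (phi y) := by
  induction h with
  | nil => rename_i b l; cases b <;> exact List.Lex.nil
  | @cons a _ _ _ ih => cases a <;> exact lex_append_left _ ih
  | rel h =>
      obtain ⟨h1, h2⟩ := bool_lt h
      subst h1; subst h2
      exact List.Lex.cons (List.Lex.rel (by decide))

lemma lex_asymm : ∀ {x y : Word}, wlt x y → wlt y x → False := by
  intro x y h1
  induction h1 with
  | nil => intro h2; cases h2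
  | cons h ih => intro h2; cases h2 with
    | cons h2 => exact ih h2
    | rel h2 => exact absurd h2 (by simp)
  | rel h => intro h2; cases h2 with
    | cons h2 => exact absurd h (by simp)
    | rel h2 => exact absurd (h.trans h2) (by simp)

lemma suffix_append_cases {s v : Word} : ∀ {u : Word}, s <:+ u ++ v →
    s <:+ v ∨ ∃ t, t <:+ u ∧ s = t ++ v := by
  intro u
  induction u with
  | nil => intro h; exact Or.inl h
  | cons c u ih =>
    intro h
    rw [List.cons_append, List.suffix_cons_iff] at h
    rcases h with h | h
    · exact Or.inr ⟨c :: u, List.suffix_refl _, h⟩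
    · rcases ih h with h | ⟨t, ht, hs⟩
      · exact Or.inl h
      · exact Or.inr ⟨t, ht.trans (List.suffix_cons c u), hs⟩

lemma suffix_enum2 {t : Word} (h : t <:+ [false, true]) :
    t = [] ∨ t = [true] ∨ t = [false, true] := by
  rw [List.suffix_cons_iff, List.suffix_cons_iff, List.suffix_nil] at h
  tauto

lemma suffix_enum3 {t : Word} (h : t <:+ [false, false, true]) :
    t = [] ∨ t = [true] ∨ t = [false, true] ∨ t = [false, false, true] := by
  rw [List.suffix_cons_iff, List.suffix_cons_iff, List.suffix_cons_iff, List.suffix_nil] at h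
  tauto

lemma suffix_phi {s : Word} : ∀ {w : Word}, s <:+ phi w →
    ∃ v t, v <:+ w ∧ s = t ++ phi v ∧ (t = [] ∨ t = [true] ∨ t = [false, true]) := by
  intro w
  induction w with
  | nil => intro h; exact ⟨[], [], List.nil_suffix, by simpa [phi] using h, Or.inl rfl⟩
  | cons c w ih =>
    intro h
    rw [phi_cons] at h
    rcases suffix_append_cases h with h | ⟨t, ht, hs⟩
    · obtain ⟨v, t, hv, hs, hts⟩ := ih h
      exact ⟨v, t, hv.trans (List.suffix_cons c w), hs, hts⟩
    · have henum : t = [] ∨ t = [true] ∨ t = [false, true] ∨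
          t = (if c then [false, true] else [false, false, true]) := by
        cases c
        · rcases suffix_enum3 (by simpa using ht) with h | h | h | h <;> simp [h]
        · rcases suffix_enum2 (by simpa using ht) with h | h | h <;> simp [h]
      rcases henum with rfl | rfl | rfl | rfl
      · exact ⟨w, [], List.suffix_cons c w, hs, Or.inl rfl⟩
      · exact ⟨w, [true], List.suffix_cons c w, hs, Or.inr (Or.inl rfl)⟩
      · exact ⟨w, [false, true], List.suffix_cons c w, hs, Or.inr (Or.inr rfl)⟩
      · exact ⟨c :: w, [], List.suffix_refl _, by simp [hs, phi_cons], Or.inl rfl⟩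

lemma phi_lyndon {w : Word} (hw : IsLyndon w) (w' : Word) (hhead : w = false :: w') :
    IsLyndon (phi w) := by
  intro s hs hne hneq
  obtain ⟨v, t, hv, rfl, hts⟩ := suffix_phi hs
  have hphiw : phi w = false :: false :: (true :: phi w') := by rw [hhead, phi_cons]; rfl
  rcases hts with rfl | rfl | rfl
  · simp only [List.nil_append] at hne hneq ⊢
    by_cases hvw : v = w
    · exact absurd (by rw [hvw]) hneq
    · have hvne : v ≠ [] := by rintro rfl; simp [phi] at hne
      exact phi_mono (hw v hv hvne hvw)
  · rw [hphiw]; exact List.Lex.rel (by decide)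
  · rw [hphiw]; exact List.Lex.cons (List.Lex.rel (by decide))

def Good (w : Word) : Prop := IsLyndon w ∧ ∃ w', w = false :: w'

lemma good_phi {w : Word} (h : Good w) : Good (phi w) := by
  obtain ⟨hl, w', rfl⟩ := h
  exact ⟨phi_lyndon hl w' rfl, false :: true :: phi w', by rw [phi_cons]; rfl⟩

lemma lyndon_a : IsLyndon [false] := by
  intro s hs hne hneq
  rw [List.suffix_cons_iff, List.suffix_nil] at hs
  tauto

lemma lyndon_ab : IsLyndon [false, true] := by
  intro s hs hne hneq
  rcases suffix_enum2 hs with rfl | rfl | rfl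
  · exact absurd rfl hne
  · exact List.Lex.rel (by decide)
  · exact absurd rfl hneq

lemma good_iter (j : ℕ) : Good (phi^[j] [false]) := by
  induction j with
  | zero => exact ⟨lyndon_a, [], rfl⟩
  | succ j ih => rw [Function.iterate_succ_apply']; exact good_phi ih

lemma good_ell (n : ℕ) : Good (ell (n + 1)) := by
  induction n with
  | zero => exact ⟨lyndon_ab, [true], rfl⟩
  | succ n ih => exact good_phi ih

lemma phi_iter_mono (m : ℕ) {x y : Word} (h : wlt x y) : wlt (phi^[m] x) (phi^[m] y) := by
  induction m with
  | zero => exact h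
  | succ m ih => rw [Function.iterate_succ_apply', Function.iterate_succ_apply']
                 exact phi_mono ih

lemma phi_iter_append (m : ℕ) (u v : Word) : phi^[m] (u ++ v) = phi^[m] u ++ phi^[m] v := by
  induction m generalizing u v with
  | zero => rfl
  | succ m ih => rw [Function.iterate_succ_apply, phi_append, ih, ← Function.iterate_succ_apply, ← Function.iterate_succ_apply]

lemma phi_iter_ne_nil (m : ℕ) {v : Word} (h : v ≠ []) : phi^[m] v ≠ [] := by
  induction m with
  | zero => exact h
  | succ m ih =>
    rw [Function.iterate_succ_apply']
    obtain ⟨c, v', hc⟩ := List.exists_cons_of_ne_nil ih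
    rw [hc, phi_cons]
    cases c <;> simp

lemma ell_eq_iter (n : ℕ) : ell (n + 1) = phi^[n] [false, true] := by
  induction n with
  | zero => rfl
  | succ n ih => rw [Function.iterate_succ_apply', ← ih]; rfl

-- order facts

lemma ell_lt (n : ℕ) : wlt (ell (n + 2)) (ell (n + 1)) := by
  rw [ell_eq_iter, ell_eq_iter, Function.iterate_succ_apply]
  exact phi_iter_mono _ (show wlt (phi [false, true]) [false, true] from
    List.Lex.cons (List.Lex.rel (by decide)))

lemma iter_a_lt (j : ℕ) : wlt (phi^[j] [false]) (phi^[j+1] [false]) := by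
  have h1 : phi^[j+1] [false] = phi^[j] [false] ++ phi^[j] [false, true] := by
    rw [Function.iterate_succ_apply, show phi [false] = [false] ++ [false, true] from rfl,
      phi_iter_append]
  rw [h1]
  exact lex_of_append_ne _ _ (phi_iter_ne_nil j (by simp))

lemma junction_lt (m : ℕ) : wlt (phi^[m+1] [false]) (ell (m + 1)) := by
  rw [ell_eq_iter, Function.iterate_succ_apply]
  exact phi_iter_mono m (show wlt [false,false,true] [false,true] from
    List.Lex.cons (List.Lex.rel (by decide)))

lemma key : ∀ n, [false, true] ++ phi (F (n+1)) = F (n+3) ++ [false, true] := by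
  intro n
  induction n using Nat.strong_induction_on with
  | _ n ih =>
    match n with
    | 0 => decide
    | 1 => decide
    | (m+2) =>
      have h1 := ih (m+1) (by omega)
      have h2 := ih m (by omega)
      have e : F (m + 3) = F (m+2) ++ F (m+1) := rfl
      calc [false, true] ++ phi (F (m + 3))
          = ([false, true] ++ phi (F (m+2))) ++ phi (F (m+1)) := by
            rw [e, phi_append]; simp
        _ = F (m+4) ++ ([false, true] ++ phi (F (m+1))) := by rw [h1]; simp
        _ = (F (m+4) ++ F (m+3)) ++ [false, true] := by rw [h2]; simp
        _ = F (m+5) ++ [false, true] := rfl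

lemma ends_ba : ∀ k, 2 ≤ k → ∃ u, F (2 * k) = u ++ [true, false] := by
  intro k hk
  induction k with
  | zero => omega
  | succ k ih =>
    rcases Nat.lt_or_ge k 2 with h | h
    · interval_cases k
      · omega
      · exact ⟨[false], by decide⟩
    · obtain ⟨u, hu⟩ := ih h
      refine ⟨F (2*k+1) ++ u, ?_⟩
      have e : F (2 * (k+1)) = F (2*k+1) ++ F (2*k) := by
        have : 2 * (k+1) = (2*k-1) + 3 := by omega
        rw [this, F]
        congr 2 <;> omega
      rw [e, hu, List.append_assoc]

lemma dropLast2 (u : Word) (x y : Bool) : (u ++ [x, y]).dropLast.dropLast = u := by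
  have : u ++ [x, y] = (u ++ [x]) ++ [y] := by simp
  rw [this, List.dropLast_concat, List.dropLast_concat]

lemma W_rec (k : ℕ) (hk : 2 ≤ k) :
    (F (2 * (k+1))).dropLast.dropLast =
      [false, true] ++ phi ((F (2 * k)).dropLast.dropLast) ++ [false] := by
  obtain ⟨u, hu⟩ := ends_ba k hk
  have hW : (F (2 * k)).dropLast.dropLast = u := by rw [hu]; exact dropLast2 u true false
  have hkey := key (2 * k - 1)
  rw [show 2*k - 1 + 1 = 2*k by omega, show 2*k - 1 + 3 = 2*(k+1) by omega] at hkey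
  have hphi : phi (F (2 * k)) = phi u ++ [false, true, false, false, true] := by
    rw [hu, phi_append]; rfl
  rw [hphi] at hkey
  have hF : F (2 * (k+1)) = [false, true] ++ phi u ++ [false, true, false] := by
    have h2 : ([false, true] ++ phi u ++ [false, true, false]) ++ [false, true]
        = F (2 * (k+1)) ++ [false, true] := by
      rw [← hkey]; simp
    have := List.append_inj_left' h2 rfl
    exact this.symm
  rw [hF, hW]
  have : [false, true] ++ phi u ++ [false, true, false]
      = ([false, true] ++ phi u ++ [false]) ++ [true, false] := by simp
  rw [this, dropLast2]

def G (k : ℕ) : List Word :=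
  (List.range (k - 2)).map (fun j => ell (j + 1)) ++
    (List.range (k - 1)).reverse.map (fun j => phi^[j] [false])

lemma flatten_map_phi (L : List Word) : (L.map phi).flatten = phi L.flatten := by
  induction L with
  | nil => rfl
  | cons x L ih => simp [ih, phi_append]

lemma G_succ (k : ℕ) (hk : 2 ≤ k) :
    G (k + 1) = ([false, true] :: (G k).map phi) ++ [[false]] := by
  unfold G
  rw [show k + 1 - 2 = (k - 2) + 1 by omega, show k + 1 - 1 = (k - 1) + 1 by omega,
    List.range_succ_eq_map, List.range_succ_eq_map (n := k - 1)]
  simp only [List.map_cons, List.map_map, List.reverse_cons, List.map_append,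
    List.map_reverse, List.map_map]
  have e1 : (fun j => ell (j + 1)) ∘ (fun j => j + 1) = phi ∘ (fun j => ell (j + 1)) := by
    funext j; show ell (j + 2) = phi (ell (j + 1)); rfl
  have e2 : (fun j => phi^[j] [false]) ∘ (fun j => j + 1) = phi ∘ (fun j => phi^[j] [false]) := by
    funext j; exact Function.iterate_succ_apply' phi j [false]
  rw [e1, e2]
  simp [ell]

lemma flatten_G (k : ℕ) (hk : 2 ≤ k) :
    (G k).flatten = (F (2 * k)).dropLast.dropLast := by
  induction k, hk using Nat.le_induction with
  | base => decide
  | succ k hk ih =>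
    rw [G_succ k hk, W_rec k hk, ← ih]
    simp [flatten_map_phi]

lemma chain_G (k : ℕ) : List.Chain' (fun x y => ¬ wlt x y) (G k) := by
  apply List.isChain_append.2
  refine ⟨?_, ?_, ?_⟩
  · rw [List.isChain_map]
    cases hm : k - 2 with
    | zero => exact List.isChain_nil
    | succ m =>
      rw [List.isChain_range_succ]
      intro i _
      exact fun h => lex_asymm h (ell_lt i)
  · rw [List.map_reverse, List.isChain_reverse, List.isChain_map]
    cases hm : k - 1 with
    | zero => exact List.isChain_nil
    | succ m =>
      rw [List.isChain_range_succ]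
      intro i _
      exact fun h => lex_asymm h (iter_a_lt i)
  · intro x hx y hy
    rcases Nat.lt_or_ge k 3 with h3 | h3
    · have : k - 2 = 0 := by omega
      rw [this] at hx
      simp at hx
    · have e1 : k - 2 = (k - 3) + 1 := by omega
      have e2 : k - 1 = (k - 2) + 1 := by omega
      rw [e1, List.range_succ, List.map_append, List.map_singleton, List.getLast?_concat] at hx
      rw [e2, List.range_succ, List.reverse_append, List.map_append, List.reverse_singleton, List.map_singleton] at hy
      rw [List.singleton_append, List.head?_cons] at hy
      simp only [Option.mem_def, Option.some.injEq] at hx hy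
      subst hx; subst hy
      rw [show k - 2 = (k - 3) + 1 by omega]
      exact fun h => lex_asymm h (junction_lt (k - 3))

/-- For `k ≥ 2`, the Lyndon factorization of `F (2k)` with its last two
characters removed is `ℓ 1, …, ℓ (k-2), φ^(k-2)(a), …, φ^0(a)`. -/
theorem stmt13 (k : ℕ) (hk : 2 ≤ k) :
    IsLyndonFactorization ((F (2 * k)).dropLast.dropLast)
      ((List.range (k - 2)).map (fun j => ell (j + 1)) ++
        (List.range (k - 1)).reverse.map (fun j => phi^[j] [false])) := by
  refine ⟨flatten_G k hk, ?_, chain_G k⟩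
  intro x hx
  simp only [List.mem_append, List.mem_map, List.mem_reverse, List.mem_range] at hx
  have hgood : Good x := by
    rcases hx with ⟨j, _, rfl⟩ | ⟨j, _, rfl⟩
    · exact good_ell j
    · exact good_iter j
  obtain ⟨hl, w', hw⟩ := hgood
  exact ⟨hl, by rw [hw]; simp⟩
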